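/- Let F be a CNF with incidence graph of pathwidth k−1, σ a forget ordering of F with respect to a witnessing path decomposition P, π a prefix of σ, v the last variable of π, and B the first bag of P containing v. Then every var(π)-active clause of F either belongs to B or occurs only in bags strictly after B in P. -/

import Mathlib

abbrev Var := ℕ
abbrev Lit := Var × Bool
abbrev Clause := Finset Lit
abbrev CNF := Finset Clause

def varsClause (c : Clause) : Finset Var := c.image Prod.fst
def varsCNF (F : CNF) : Finset Var := F.sup varsClause
def sizeCNF (F : CNF) : ℕ := ∑ c ∈ F, c.card

def satClauseOn (X : Finset Var) (f : Var → Bool) (c : Clause) : Prop :=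
  ∃ l ∈ c, l.1 ∈ X ∧ f l.1 = l.2

instance (X : Finset Var) (f : Var → Bool) : DecidablePred (satClauseOn X f) := fun c => by
  unfold satClauseOn; infer_instance

def restrict (F : CNF) (X : Finset Var) (f : Var → Bool) : CNF :=
  (F.filter (fun c => ¬ satClauseOn X f c)).image (fun c => c.filter (fun l => l.1 ∉ X))

def st (F : CNF) (X : Finset Var) : Set CNF := { G | ∃ f : Var → Bool, G = restrict F X f }

noncomputable def stw (F : CNF) (σ : List Var) : ℕ :=
  (Finset.Icc 1 σ.length).sup fun i => (st F ((σ.take i).toFinset)).ncard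

def satCNF (F : CNF) (f : Var → Bool) : Prop := ∀ c ∈ F, ∃ l ∈ c, f l.1 = l.2

structure OBDD (σ : List Var) where
  size : ℕ
  label : Fin size → (Fin σ.length) ⊕ Bool
  succ : Fin size → Bool → Fin size
  source : Fin size
  ordered : ∀ v i, label v = Sum.inl i → ∀ b j, label (succ v b) = Sum.inl j → i < j

def OBDD.evalAux {σ : List Var} (D : OBDD σ) (f : Var → Bool) : ℕ → Fin D.size → Bool
  | 0, v => match D.label v with | .inr b => b | .inl _ => false
  | n+1, v => match D.label v with
    | .inr b => b
    | .inl i => D.evalAux f n (D.succ v (f (σ.get i)))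

def OBDD.eval {σ : List Var} (D : OBDD σ) (f : Var → Bool) : Bool :=
  D.evalAux f (σ.length + 1) D.source

def OBDD.computes {σ : List Var} (D : OBDD σ) (F : CNF) : Prop :=
  ∀ f : Var → Bool, D.eval f = true ↔ satCNF F f

/-- Vertices of the incidence graph of a CNF: variables and clauses. -/
abbrev IVertex := Var ⊕ Clause

/-- P is a path decomposition of the incidence graph of F. -/
def IsPathDecomp (F : CNF) (P : List (Finset IVertex)) : Prop :=
  (∀ x ∈ varsCNF F, ∃ B ∈ P, Sum.inl x ∈ B) ∧
  (∀ c ∈ F, ∃ B ∈ P, Sum.inr c ∈ B) ∧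
  (∀ c ∈ F, ∀ x ∈ varsClause c, ∃ B ∈ P, Sum.inl x ∈ B ∧ Sum.inr c ∈ B) ∧
  (∀ u : IVertex, ∀ i j k : ℕ, i ≤ j → j ≤ k →
    ∀ (hi : i < P.length) (hj : j < P.length) (hk : k < P.length),
      u ∈ P.get ⟨i, hi⟩ → u ∈ P.get ⟨k, hk⟩ → u ∈ P.get ⟨j, hj⟩)

/-- Index of the first bag of P containing the vertex u. -/
def firstIdx (P : List (Finset IVertex)) (u : IVertex) : ℕ :=
  P.findIdx (fun B => decide (u ∈ B))

/-- σ is a forget ordering of var(F) with respect to the path decomposition P: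
variables are ordered by the position of the first bag containing them. -/
def IsForgetOrdering (F : CNF) (P : List (Finset IVertex)) (σ : List Var) : Prop :=
  σ.Nodup ∧ σ.toFinset = varsCNF F ∧
    ∀ x ∈ varsCNF F, ∀ y ∈ varsCNF F,
      firstIdx P (Sum.inl x) < firstIdx P (Sum.inl y) → σ.idxOf x < σ.idxOf y


/-- let v be the last variable of the prefix π of a forget ordering σ and
B the first bag containing v; then every var(π)-active clause either belongs to B or
occurs only in bags strictly after B. -/
theorem active_clause_in_or_after_bag (F : CNF) (k : ℕ) (P : List (Finset IVertex))
    (σ : List Var) (hP : IsPathDecomp F P) (hw : ∀ B ∈ P, B.card ≤ k)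
    (hσ : IsForgetOrdering F P σ)
    (i : ℕ) (hi : i < σ.length)
    (hfi : firstIdx P (Sum.inl (σ.get ⟨i, hi⟩)) < P.length)
    (c : Clause) (hc : c ∈ F)
    (hact : (varsClause c ∩ (σ.take (i+1)).toFinset).Nonempty ∧
            (varsClause c \ (σ.take (i+1)).toFinset).Nonempty) :
    Sum.inr c ∈ P.get ⟨firstIdx P (Sum.inl (σ.get ⟨i, hi⟩)), hfi⟩ ∨
      (∀ j (hj : j < P.length), Sum.inr c ∈ P.get ⟨j, hj⟩ →
        firstIdx P (Sum.inl (σ.get ⟨i, hi⟩)) < j) := by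
  set v := σ.get ⟨i, hi⟩ with hv
  set t := firstIdx P (Sum.inl v) with ht
  by_cases hB : Sum.inr c ∈ P.get ⟨t, hfi⟩
  · exact Or.inl hB
  right
  intro j hj hcj
  by_contra hle
  push_neg at hle
  have hjt : j < t := lt_of_le_of_ne hle (by rintro rfl; exact hB hcj)
  obtain ⟨y, hy⟩ := hact.2
  have hy1 : y ∈ varsClause c := (Finset.mem_sdiff.mp hy).1
  have hy2 : y ∉ (σ.take (i+1)).toFinset := (Finset.mem_sdiff.mp hy).2
  obtain ⟨B, hBP, hyB, hcB⟩ := hP.2.2.1 c hc y hy1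
  obtain ⟨⟨j', hj'⟩, rfl⟩ := List.mem_iff_get.mp hBP
  -- j' < t, else convexity puts c in bag t
  have hj't : j' < t := by
    by_contra h
    push_neg at h
    exact hB (hP.2.2.2 (Sum.inr c) j t j' (le_of_lt hjt) h hj hfi hj' hcj hcB)
  -- firstIdx of y ≤ j'
  have hfy : firstIdx P (Sum.inl y) ≤ j' := by
    by_contra h
    push_neg at h
    have := List.not_of_lt_findIdx (p := fun B => decide ((Sum.inl y : IVertex) ∈ B)) h
    simp only [decide_eq_false_iff_not] at this
    exact this hyB
  have hyF : y ∈ varsCNF F := Finset.mem_sup.mpr ⟨c, hc, hy1⟩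
  have hvF : v ∈ varsCNF F := by
    rw [← hσ.2.1, List.mem_toFinset]
    exact List.get_mem σ _
  have hidx : σ.idxOf y < σ.idxOf v :=
    hσ.2.2 y hyF v hvF (lt_of_le_of_lt hfy hj't)
  have hiv : σ.idxOf v = i := by
    rw [hv]
    exact List.Nodup.idxOf_getElem hσ.1 i hi
  rw [hiv] at hidx
  apply hy2
  rw [List.mem_toFinset]
  have hylt : σ.idxOf y < σ.length := lt_trans hidx hi
  have : (σ.take (i+1))[σ.idxOf y]'(by simp; omega) = y := by
    rw [List.getElem_take]
    exact List.getElem_idxOf hylt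
  exact this ▸ List.getElem_mem _
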